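/- Let P⁰ and P¹ be two points in the unit square [0,1]². Then there exists a corner c ∈ {0,1}² such that no point on the line segment joining P⁰ and P¹ lies in the open quarter of the square nearest to c, i.e., for every point (a,b) on the segment, it is not the case that both |a - c₁| < 1/2 and |b - c₂| < 1/2. -/
import Mathlib


/-- For any two points P⁰, P¹ in the unit square, there is a corner c of the
square such that no point of the segment joining P⁰ and P¹ lies in the open
quarter of the square nearest to c. -/
theorem segment_misses_a_quarter
    (P0 P1 : ℝ × ℝ)
    (h0 : P0.1 ∈ Set.Icc (0 : ℝ) 1 ∧ P0.2 ∈ Set.Icc (0 : ℝ) 1)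
    (h1 : P1.1 ∈ Set.Icc (0 : ℝ) 1 ∧ P1.2 ∈ Set.Icc (0 : ℝ) 1) :
    ∃ c : Bool × Bool, ∀ t : ℝ, 0 ≤ t → t ≤ 1 →
      ¬ (|(t * P0.1 + (1 - t) * P1.1) - (if c.1 then 1 else 0)| < 1 / 2 ∧
         |(t * P0.2 + (1 - t) * P1.2) - (if c.2 then 1 else 0)| < 1 / 2) := by
  by_contra h
  push_neg at h
  obtain ⟨t1, _, _, h1x, h1y⟩ := h (false, false)
  obtain ⟨t2, _, _, h2x, h2y⟩ := h (false, true)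
  obtain ⟨t3, _, _, h3x, h3y⟩ := h (true, false)
  obtain ⟨t4, _, _, h4x, h4y⟩ := h (true, true)
  simp only [if_true, if_false, Bool.false_eq_true, abs_lt] at h1x h1y h2x h2y h3x h3y h4x h4y
  -- x-coordinate inequalities
  have f1 : t1 * P0.1 + (1 - t1) * P1.1 < 1 / 2 := by linarith [h1x.2]
  have f2 : t2 * P0.1 + (1 - t2) * P1.1 < 1 / 2 := by linarith [h2x.2]
  have f3 : 1 / 2 < t3 * P0.1 + (1 - t3) * P1.1 := by linarith [h3x.1]
  have f4 : 1 / 2 < t4 * P0.1 + (1 - t4) * P1.1 := by linarith [h4x.1]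
  -- y-coordinate inequalities
  have g1 : t1 * P0.2 + (1 - t1) * P1.2 < 1 / 2 := by linarith [h1y.2]
  have g3 : t3 * P0.2 + (1 - t3) * P1.2 < 1 / 2 := by linarith [h3y.2]
  have g2 : 1 / 2 < t2 * P0.2 + (1 - t2) * P1.2 := by linarith [h2y.1]
  have g4 : 1 / 2 < t4 * P0.2 + (1 - t4) * P1.2 := by linarith [h4y.1]
  have eAu : (P0.1 - P1.1) * (t3 - t2)
      = (t3 * P0.1 + (1 - t3) * P1.1) - (t2 * P0.1 + (1 - t2) * P1.1) := by ring
  have eCu : (P0.2 - P1.2) * (t3 - t2)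
      = (t3 * P0.2 + (1 - t3) * P1.2) - (t2 * P0.2 + (1 - t2) * P1.2) := by ring
  have eAv : (P0.1 - P1.1) * (t4 - t1)
      = (t4 * P0.1 + (1 - t4) * P1.1) - (t1 * P0.1 + (1 - t1) * P1.1) := by ring
  have eCv : (P0.2 - P1.2) * (t4 - t1)
      = (t4 * P0.2 + (1 - t4) * P1.2) - (t1 * P0.2 + (1 - t1) * P1.2) := by ring
  have hAu : 0 < (P0.1 - P1.1) * (t3 - t2) := by rw [eAu]; linarith
  have hCu : (P0.2 - P1.2) * (t3 - t2) < 0 := by rw [eCu]; linarith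
  have hAv : 0 < (P0.1 - P1.1) * (t4 - t1) := by rw [eAv]; linarith
  have hCv : 0 < (P0.2 - P1.2) * (t4 - t1) := by rw [eCv]; linarith
  have key : (P0.1 - P1.1) * (t3 - t2) * ((P0.2 - P1.2) * (t4 - t1))
      = (P0.2 - P1.2) * (t3 - t2) * ((P0.1 - P1.1) * (t4 - t1)) := by ring
  linarith [mul_pos hAu hCv, mul_neg_of_neg_of_pos hCu hAv, key]
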